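/- arXiv:1906.05985 — 8 statements merged into one kernel-verified Lean document; each statement's English description precedes it below -/
import Mathlib

section
/- Let n ≥ 1 and let B, L : ℝ → M(n,ℝ) be maps into the n × n real matrices such that B is differentiable and for every t ∈ ℝ one has B'(t) = (1/2)·(L(t)·B(t)ᵀ − B(t)·L(t)ᵀ)·B(t). Then B(t)ᵀ·B(t) = B(0)ᵀ·B(0) for all t ∈ ℝ; in particular, if B(0) is orthogonal (B(0)ᵀ·B(0) = I), then B(t) is orthogonal for all t ∈ ℝ. -/
open Matrix

attribute [local instance] Matrix.frobeniusNormedAddCommGroup Matrix.frobeniusNormedSpace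

attribute [local instance] Matrix.frobeniusNormedRing Matrix.frobeniusNormedAlgebra

set_option maxHeartbeats 1000000 in
/-- Transpose commutes with `HasDerivAt` for square-matrix-valued functions of a real variable. -/
theorem hasDerivAt_transpose' {n : ℕ} {f : ℝ → Matrix (Fin n) (Fin n) ℝ}
    {f' : Matrix (Fin n) (Fin n) ℝ} {t : ℝ} (h : HasDerivAt f f' t) :
    HasDerivAt (fun x => (f x)ᵀ) f'ᵀ t := by
  have := (LinearMap.toContinuousLinearMap
      (Matrix.transposeLinearEquiv (Fin n) (Fin n) ℝ ℝ).toLinearMap).hasFDerivAt.comp_hasDerivAt t h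
  exact this

set_option maxHeartbeats 1000000 in
/-- The pointwise-in-space core of the `O_n` diffusion equation: if
`B'(t) = (1/2) (L(t) B(t)ᵀ - B(t) L(t)ᵀ) B(t)`, then `B(t)ᵀ B(t)` is constant in time;
in particular orthogonality of `B(0)` is preserved. -/
theorem stmt0 (n : ℕ) (hn : 1 ≤ n) (B L : ℝ → Matrix (Fin n) (Fin n) ℝ)
    (hB : ∀ t : ℝ, HasDerivAt B
      ((1 / 2 : ℝ) • ((L t * (B t)ᵀ - B t * (L t)ᵀ) * B t)) t) :
    (∀ t : ℝ, (B t)ᵀ * B t = (B 0)ᵀ * B 0) ∧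
      ((B 0)ᵀ * B 0 = 1 → ∀ t : ℝ, (B t)ᵀ * B t = 1) := by
  have hG : ∀ t : ℝ, HasDerivAt (fun t => (B t)ᵀ * B t) 0 t := by
    intro t
    have h := (hasDerivAt_transpose' (hB t)).mul (hB t)
    have hzero :
        ((1 / 2 : ℝ) • ((L t * (B t)ᵀ - B t * (L t)ᵀ) * B t))ᵀ * B t +
          (B t)ᵀ * ((1 / 2 : ℝ) • ((L t * (B t)ᵀ - B t * (L t)ᵀ) * B t)) = 0 := by
      simp only [Matrix.transpose_smul, Matrix.transpose_mul, Matrix.transpose_sub,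
        Matrix.transpose_transpose, Matrix.smul_mul, Matrix.mul_smul, ← smul_add]
      rw [smul_eq_zero]
      right
      noncomm_ring
    rw [hzero] at h
    exact h
  have key : ∀ t : ℝ, (B t)ᵀ * B t = (B 0)ᵀ * B 0 := fun t =>
    is_const_of_deriv_eq_zero (fun x => (hG x).differentiableAt)
      (fun x => (hG x).deriv) t 0
  exact ⟨key, fun h t => (key t).trans h⟩
end

section
/- Let n ≥ 1 and let B : ℝ × ℝ² → M(n,ℝ) be such that for each x ∈ ℝ² the map t ↦ B(t,x) is differentiable, for each t ∈ ℝ the map x ↦ B(t,x) is twice continuously differentiable, and for all (t,x) one has ∂_t B(t,x) = (1/2)·(Δ_x B(t,x)·B(t,x)ᵀ − B(t,x)·(Δ_x B(t,x))ᵀ)·B(t,x), where Δ_x denotes the entrywise Laplacian in x. If B(0,x)ᵀ·B(0,x) = I for every x ∈ ℝ², then B(t,x)ᵀ·B(t,x) = I for every t ∈ ℝ and every x ∈ ℝ², i.e. B(t,x) is an orthogonal matrix for all t and x. -/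
open Matrix

attribute [local instance] Matrix.frobeniusNormedAddCommGroup Matrix.frobeniusNormedSpace

attribute [local instance] Matrix.frobeniusNormedRing Matrix.frobeniusNormedAlgebra

/-- The entrywise Laplacian `Δu = ∂²u/∂x₁² + ∂²u/∂x₂²` of a function `u : ℝ² → E`. -/
noncomputable def lap {E : Type*} [NormedAddCommGroup E] [NormedSpace ℝ E]
    (u : ℝ × ℝ → E) (x : ℝ × ℝ) : E :=
  deriv (fun s => deriv (fun s' => u (s', x.2)) s) x.1 +
    deriv (fun s => deriv (fun s' => u (x.1, s')) s) x.2

/-- Proposition 2.2: solutions of the `O_n` diffusion equation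
`∂_t B = (1/2)(Δ_x B · Bᵀ - B · (Δ_x B)ᵀ) B` with pointwise orthogonal initial data
remain pointwise orthogonal for all time. -/
theorem stmt1 (n : ℕ) (hn : 1 ≤ n) (B : ℝ → ℝ × ℝ → Matrix (Fin n) (Fin n) ℝ)
    (hBt : ∀ x : ℝ × ℝ, Differentiable ℝ (fun t => B t x))
    (hBx : ∀ t : ℝ, ContDiff ℝ 2 (fun x => B t x))
    (hPDE : ∀ (t : ℝ) (x : ℝ × ℝ), HasDerivAt (fun s => B s x)
      ((1 / 2 : ℝ) •
        ((lap (fun y => B t y) x * (B t x)ᵀ - B t x * (lap (fun y => B t y) x)ᵀ) * B t x)) t)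
    (h0 : ∀ x : ℝ × ℝ, (B 0 x)ᵀ * B 0 x = 1) :
    ∀ (t : ℝ) (x : ℝ × ℝ), (B t x)ᵀ * B t x = 1 := by
  intro t x
  set Tclm : Matrix (Fin n) (Fin n) ℝ →L[ℝ] Matrix (Fin n) (Fin n) ℝ :=
    LinearMap.toContinuousLinearMap
      (Matrix.transposeLinearEquiv (Fin n) (Fin n) ℝ ℝ).toLinearMap with hT
  have hTapp : ∀ M : Matrix (Fin n) (Fin n) ℝ, Tclm M = Mᵀ := by
    intro M; simp [hT, Matrix.transposeLinearEquiv]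
  have hg : ∀ s : ℝ, HasDerivAt (fun u => (B u x)ᵀ * B u x) 0 s := by
    intro s
    have hD := hPDE s x
    have hDT : HasDerivAt (fun u => (B u x)ᵀ)
        ((1 / 2 : ℝ) •
          ((lap (fun y => B s y) x * (B s x)ᵀ - B s x * (lap (fun y => B s y) x)ᵀ) * B s x))ᵀ
        s := by
      have := (Tclm.hasFDerivAt.comp_hasDerivAt s hD)
      have e : (⇑Tclm ∘ fun s => B s x) = fun u => (B u x)ᵀ := funext fun u => hTapp _
      rw [e] at this
      exact this.congr_deriv (hTapp _)
    have := hDT.mul hD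
    convert this using 1
    · rfl
    · rfl
    · rfl
    · rfl
    set L := lap (fun y => B s y) x
    set C := B s x
    have hMT : (L * Cᵀ - C * Lᵀ)ᵀ = -(L * Cᵀ - C * Lᵀ) := by
      simp [Matrix.transpose_sub, Matrix.transpose_mul]
    rw [Matrix.transpose_smul, Matrix.transpose_mul, hMT]
    simp only [Matrix.smul_mul, Matrix.mul_smul]
    rw [← smul_add]
    symm; rw [smul_eq_zero]
    right
    noncomm_ring
  have hdiff : Differentiable ℝ (fun u => (B u x)ᵀ * B u x) := fun s => (hg s).differentiableAt
  have hconst : (fun u => (B u x)ᵀ * B u x) t = (fun u => (B u x)ᵀ * B u x) 0 :=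
    is_const_of_deriv_eq_zero hdiff (fun s => (hg s).deriv) t 0
  simpa [h0 x] using hconst
end

section
/- Let η : ℝ × ℝ² → ℝ be differentiable in t for each x and twice continuously differentiable in x for each t, and define B(t,x) = R(η(t,x)), where R(θ) is the 2 × 2 rotation matrix. Then at every point (t,x), B satisfies the O_n diffusion equation ∂_t B(t,x) = (1/2)·(Δ_x B(t,x)·B(t,x)ᵀ − B(t,x)·(Δ_x B(t,x))ᵀ)·B(t,x) if and only if η satisfies the heat equation ∂_t η(t,x) = Δ_x η(t,x) at (t,x). -/
open Matrix

attribute [local instance] Matrix.frobeniusNormedAddCommGroup Matrix.frobeniusNormedSpace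

/-- The `2 × 2` rotation matrix of angle `θ`. -/
noncomputable def rot (θ : ℝ) : Matrix (Fin 2) (Fin 2) ℝ :=
  !![Real.cos θ, -Real.sin θ; Real.sin θ, Real.cos θ]

/-- identity basis matrix -/
def E1 : Matrix (Fin 2) (Fin 2) ℝ := !![1, 0; 0, 1]

/-- rotation generator -/
def E2 : Matrix (Fin 2) (Fin 2) ℝ := !![0, -1; 1, 0]

lemma rot_eq (θ : ℝ) : rot θ = Real.cos θ • E1 + Real.sin θ • E2 := by
  ext i j
  fin_cases i <;> fin_cases j <;> simp [rot, E1, E2]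

lemma two_eq : (2 : WithTop ℕ∞) = 1 + 1 := by norm_num

lemma deriv_cd {f : ℝ → ℝ} (hf : ContDiff ℝ 2 f) : ContDiff ℝ 1 (deriv f) := by
  rw [two_eq] at hf
  exact (contDiff_succ_iff_deriv.mp hf).2.2

lemma deriv2_cos (f : ℝ → ℝ) (hf : ContDiff ℝ 2 f) (p : ℝ) :
    deriv (fun s => deriv (fun s' => Real.cos (f s')) s) p
      = -Real.cos (f p) * (deriv f p) ^ 2 - Real.sin (f p) * deriv (deriv f) p := by
  have hf' : Differentiable ℝ f := hf.differentiable (by norm_num)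
  have hfd : Differentiable ℝ (deriv f) := (deriv_cd hf).differentiable (by norm_num)
  have h1 : (fun s => deriv (fun s' => Real.cos (f s')) s)
      = fun s => -Real.sin (f s) * deriv f s :=
    funext fun s => ((hf' s).hasDerivAt.cos).deriv
  rw [h1]
  have h2 : HasDerivAt (fun s => -Real.sin (f s) * deriv f s)
      ((-(Real.cos (f p) * deriv f p)) * deriv f p + (-Real.sin (f p)) * deriv (deriv f) p) p :=
    ((hf' p).hasDerivAt.sin.neg).mul (hfd p).hasDerivAt
  rw [h2.deriv]; ring

lemma deriv2_sin (f : ℝ → ℝ) (hf : ContDiff ℝ 2 f) (p : ℝ) :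
    deriv (fun s => deriv (fun s' => Real.sin (f s')) s) p
      = -Real.sin (f p) * (deriv f p) ^ 2 + Real.cos (f p) * deriv (deriv f) p := by
  have hf' : Differentiable ℝ f := hf.differentiable (by norm_num)
  have hfd : Differentiable ℝ (deriv f) := (deriv_cd hf).differentiable (by norm_num)
  have h1 : (fun s => deriv (fun s' => Real.sin (f s')) s)
      = fun s => Real.cos (f s) * deriv f s :=
    funext fun s => ((hf' s).hasDerivAt.sin).deriv
  rw [h1]
  have h2 : HasDerivAt (fun s => Real.cos (f s) * deriv f s)
      ((-Real.sin (f p) * deriv f p) * deriv f p + Real.cos (f p) * deriv (deriv f) p) p :=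
    ((hf' p).hasDerivAt.cos).mul (hfd p).hasDerivAt
  rw [h2.deriv]; ring

lemma deriv2_smul_pair (c d : ℝ → ℝ) (hc : ContDiff ℝ 2 c) (hd : ContDiff ℝ 2 d)
    (M N : Matrix (Fin 2) (Fin 2) ℝ) (p : ℝ) :
    deriv (fun s => deriv (fun s' => c s' • M + d s' • N) s) p
      = deriv (deriv c) p • M + deriv (deriv d) p • N := by
  have hc' : Differentiable ℝ c := hc.differentiable (by norm_num)
  have hd' : Differentiable ℝ d := hd.differentiable (by norm_num)
  have hcd : Differentiable ℝ (deriv c) := (deriv_cd hc).differentiable (by norm_num)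
  have hdd : Differentiable ℝ (deriv d) := (deriv_cd hd).differentiable (by norm_num)
  have h1 : (fun s => deriv (fun s' => c s' • M + d s' • N) s)
      = fun s => deriv c s • M + deriv d s • N :=
    funext fun s =>
      (((hc' s).hasDerivAt.smul_const M).add ((hd' s).hasDerivAt.smul_const N)).deriv
  rw [h1]
  exact (((hcd p).hasDerivAt.smul_const M).add ((hdd p).hasDerivAt.smul_const N)).deriv

lemma line1_cd {f : ℝ × ℝ → ℝ} (hf : ContDiff ℝ 2 f) (b : ℝ) :
    ContDiff ℝ 2 (fun s : ℝ => f (s, b)) :=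
  hf.comp (contDiff_id.prodMk contDiff_const)

lemma line2_cd {f : ℝ × ℝ → ℝ} (hf : ContDiff ℝ 2 f) (b : ℝ) :
    ContDiff ℝ 2 (fun s : ℝ => f (b, s)) :=
  hf.comp (contDiff_const.prodMk contDiff_id)

lemma lap_smul_pair (c d : ℝ × ℝ → ℝ) (hc : ContDiff ℝ 2 c) (hd : ContDiff ℝ 2 d)
    (M N : Matrix (Fin 2) (Fin 2) ℝ) (x : ℝ × ℝ) :
    lap (fun y => c y • M + d y • N) x = lap c x • M + lap d x • N := by
  have h1 := deriv2_smul_pair (fun s => c (s, x.2)) (fun s => d (s, x.2))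
    (line1_cd hc x.2) (line1_cd hd x.2) M N x.1
  have h2 := deriv2_smul_pair (fun s => c (x.1, s)) (fun s => d (x.1, s))
    (line2_cd hc x.1) (line2_cd hd x.1) M N x.2
  simp only [lap]
  erw [h1, h2]; rw [add_smul, add_smul]
  abel

lemma lap_cos (f : ℝ × ℝ → ℝ) (hf : ContDiff ℝ 2 f) (x : ℝ × ℝ) :
    lap (fun y => Real.cos (f y)) x
      = -Real.cos (f x) *
          ((deriv (fun s => f (s, x.2)) x.1) ^ 2 + (deriv (fun s => f (x.1, s)) x.2) ^ 2)
        - Real.sin (f x) * lap f x := by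
  have h1 := deriv2_cos (fun s => f (s, x.2)) (line1_cd hf x.2) x.1
  have h2 := deriv2_cos (fun s => f (x.1, s)) (line2_cd hf x.1) x.2
  simp only [lap]
  rw [h1, h2]
  simp only [Prod.mk.eta]
  ring

lemma lap_sin (f : ℝ × ℝ → ℝ) (hf : ContDiff ℝ 2 f) (x : ℝ × ℝ) :
    lap (fun y => Real.sin (f y)) x
      = -Real.sin (f x) *
          ((deriv (fun s => f (s, x.2)) x.1) ^ 2 + (deriv (fun s => f (x.1, s)) x.2) ^ 2)
        + Real.cos (f x) * lap f x := by
  have h1 := deriv2_sin (fun s => f (s, x.2)) (line1_cd hf x.2) x.1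
  have h2 := deriv2_sin (fun s => f (x.1, s)) (line2_cd hf x.1) x.2
  simp only [lap]
  rw [h1, h2]
  simp only [Prod.mk.eta]
  ring

lemma E1t : E1ᵀ = E1 := by
  ext i j; fin_cases i <;> fin_cases j <;> simp [E1]

lemma E2t : E2ᵀ = !![0, 1; -1, 0] := by
  ext i j; fin_cases i <;> fin_cases j <;> simp [E2]

lemma rott (a : ℝ) : (rot a)ᵀ = !![Real.cos a, Real.sin a; -Real.sin a, Real.cos a] := by
  ext i j; fin_cases i <;> fin_cases j <;> simp [rot]

lemma algebra_key (a g L : ℝ) :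
    (1 / 2 : ℝ) •
      ((((-Real.cos a * g - Real.sin a * L) • E1 + (-Real.sin a * g + Real.cos a * L) • E2)
            * (rot a)ᵀ
          - rot a *
            ((-Real.cos a * g - Real.sin a * L) • E1
              + (-Real.sin a * g + Real.cos a * L) • E2)ᵀ) * rot a)
      = (-Real.sin a * L) • E1 + (Real.cos a * L) • E2 := by
  have hsc := Real.sin_sq_add_cos_sq a
  rw [Matrix.transpose_add, Matrix.transpose_smul, Matrix.transpose_smul, E1t, E2t, rott]
  ext i j
  fin_cases i <;> fin_cases j <;>
    simp [rot, E1, E2, Matrix.mul_apply, Fin.sum_univ_two, smul_eq_mul]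
  · linear_combination (-Real.sin a * L) * hsc
  · linear_combination (-Real.cos a * L) * hsc
  · linear_combination (Real.cos a * L) * hsc
  · linear_combination (-Real.sin a * L) * hsc

/-- The `SO_2` rotation ansatz `B(t,x) = R(η(t,x))` satisfies the `O_n` diffusion equation
at a point exactly when the phase `η` satisfies the heat equation there. -/
theorem stmt2 (η : ℝ → ℝ × ℝ → ℝ)
    (hηt : ∀ x : ℝ × ℝ, Differentiable ℝ (fun t => η t x))
    (hηx : ∀ t : ℝ, ContDiff ℝ 2 (fun x => η t x))
    (B : ℝ → ℝ × ℝ → Matrix (Fin 2) (Fin 2) ℝ)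
    (hB : ∀ (t : ℝ) (x : ℝ × ℝ), B t x = rot (η t x)) :
    ∀ (t : ℝ) (x : ℝ × ℝ),
      (deriv (fun s => B s x) t =
          (1 / 2 : ℝ) •
            ((lap (fun y => B t y) x * (B t x)ᵀ - B t x * (lap (fun y => B t y) x)ᵀ) * B t x)) ↔
        deriv (fun s => η s x) t = lap (fun y => η t y) x := by
  intro t x
  set a : ℝ := η t x with ha
  set dt : ℝ := deriv (fun s => η s x) t with hdt
  set L : ℝ := lap (fun y => η t y) x with hL
  set g : ℝ := (deriv (fun s => η t (s, x.2)) x.1) ^ 2 + (deriv (fun s => η t (x.1, s)) x.2) ^ 2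
    with hg
  have hηta : HasDerivAt (fun s => η s x) dt t := ((hηt x) t).hasDerivAt
  -- time derivative of B
  have hdB : deriv (fun s => B s x) t
      = (-Real.sin a * dt) • E1 + (Real.cos a * dt) • E2 := by
    have hfun : (fun s => B s x) = fun s => Real.cos (η s x) • E1 + Real.sin (η s x) • E2 := by
      funext s; rw [hB, rot_eq]
    rw [hfun]
    exact ((hηta.cos.smul_const E1).add (hηta.sin.smul_const E2)).deriv
  -- spatial Laplacian of B
  have hlapB : lap (fun y => B t y) x
      = (-Real.cos a * g - Real.sin a * L) • E1 + (-Real.sin a * g + Real.cos a * L) • E2 := by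
    have hfun : (fun y => B t y) = fun y => Real.cos (η t y) • E1 + Real.sin (η t y) • E2 := by
      funext y; rw [hB, rot_eq]
    rw [hfun, lap_smul_pair (fun y => Real.cos (η t y)) (fun y => Real.sin (η t y))
      (Real.contDiff_cos.comp (hηx t)) (Real.contDiff_sin.comp (hηx t)) E1 E2 x,
      lap_cos (fun y => η t y) (hηx t) x, lap_sin (fun y => η t y) (hηx t) x]
  rw [hdB, hlapB, hB, algebra_key a g L]
  constructor
  · intro h
    have h00 := congrArg (fun m => m 0 0) h
    have h10 := congrArg (fun m => m 1 0) h
    simp [E1, E2, Matrix.smul_apply, Matrix.add_apply, smul_eq_mul] at h00 h10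
    have hsc := Real.sin_sq_add_cos_sq a
    rcases h00 with h' | hs
    · exact h'
    rcases h10 with h' | hc
    · exact h'
    nlinarith [hsc, hs, hc]
  · intro h
    rw [h]
end

section
/- Let η : ℝ × ℝ² → ℝ be differentiable in t for each x and twice continuously differentiable in x for each t, and define φ : ℝ × ℝ² → ℂ by φ(t,x) = exp(i·η(t,x)). Then at every point (t,x), φ satisfies the spherical diffusion equation ∂_t φ = Δ_x φ + |∇_x φ|²·φ (where |∇_x φ|² = |∂_{x₁}φ|² + |∂_{x₂}φ|²) if and only if η satisfies the heat equation ∂_t η = Δ_x η at (t,x). -/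
/-- The partial derivative in the first variable of `u : ℝ² → E`. -/
noncomputable def pd1 {E : Type*} [NormedAddCommGroup E] [NormedSpace ℝ E]
    (u : ℝ × ℝ → E) (x : ℝ × ℝ) : E :=
  deriv (fun s => u (s, x.2)) x.1

/-- The partial derivative in the second variable of `u : ℝ² → E`. -/
noncomputable def pd2 {E : Type*} [NormedAddCommGroup E] [NormedSpace ℝ E]
    (u : ℝ × ℝ → E) (x : ℝ × ℝ) : E :=
  deriv (fun s => u (x.1, s)) x.2

lemma expI_hasDerivAt (f : ℝ → ℝ) (s : ℝ) (hf : DifferentiableAt ℝ f s) :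
    HasDerivAt (fun s => Complex.exp (Complex.I * Complex.ofReal (f s)))
      (Complex.I * Complex.ofReal (deriv f s) *
        Complex.exp (Complex.I * Complex.ofReal (f s))) s := by
  have h := ((hf.hasDerivAt.ofReal_comp).const_mul Complex.I).cexp
  convert h using 1
  ring

lemma expI_second (g h : ℝ → ℝ) (s : ℝ) (hg : DifferentiableAt ℝ g s)
    (hh : DifferentiableAt ℝ h s) :
    HasDerivAt (fun s => Complex.I * Complex.ofReal (g s) *
        Complex.exp (Complex.I * Complex.ofReal (h s)))
      (Complex.I * Complex.ofReal (deriv g s) *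
          Complex.exp (Complex.I * Complex.ofReal (h s)) +
        Complex.I * Complex.ofReal (g s) *
          (Complex.I * Complex.ofReal (deriv h s) *
            Complex.exp (Complex.I * Complex.ofReal (h s)))) s :=
  ((hg.hasDerivAt.ofReal_comp).const_mul Complex.I).mul (expI_hasDerivAt h s hh)

lemma norm_I_mul_exp (a b : ℝ) :
    ‖Complex.I * Complex.ofReal a * Complex.exp (Complex.I * Complex.ofReal b)‖ = |a| := by
  rw [norm_mul, norm_mul]
  simp [Complex.norm_exp]

/-- The ansatz `φ = e^{iη}` satisfies the spherical diffusion equation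
`∂_t φ = Δφ + |∇φ|² φ` at a point exactly when the phase `η` satisfies the heat
equation there. -/
theorem stmt3 (η : ℝ → ℝ × ℝ → ℝ)
    (hηt : ∀ x : ℝ × ℝ, Differentiable ℝ (fun t => η t x))
    (hηx : ∀ t : ℝ, ContDiff ℝ 2 (fun x => η t x))
    (φ : ℝ → ℝ × ℝ → ℂ)
    (hφ : ∀ (t : ℝ) (x : ℝ × ℝ), φ t x = Complex.exp (Complex.I * (η t x : ℂ))) :
    ∀ (t : ℝ) (x : ℝ × ℝ),
      (deriv (fun s => φ s x) t =
          lap (fun y => φ t y) x +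
            ((‖pd1 (fun y => φ t y) x‖ ^ 2 + ‖pd2 (fun y => φ t y) x‖ ^ 2 : ℝ) : ℂ) * φ t x) ↔
        deriv (fun s => η s x) t = lap (fun y => η t y) x := by
  intro t x
  obtain ⟨x1, x2⟩ := x
  set E : ℂ := Complex.exp (Complex.I * Complex.ofReal (η t (x1, x2))) with hE
  have hline1 : ∀ b : ℝ, ContDiff ℝ 2 (fun s : ℝ => η t (s, b)) := fun b =>
    (hηx t).comp (contDiff_id.prodMk contDiff_const)
  have hline2 : ∀ a : ℝ, ContDiff ℝ 2 (fun s : ℝ => η t (a, s)) := fun a =>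
    (hηx t).comp (contDiff_const.prodMk contDiff_id)
  have hdiff1 : ∀ b, Differentiable ℝ (fun s : ℝ => η t (s, b)) := fun b =>
    (hline1 b).differentiable (by norm_num)
  have hdiff2 : ∀ a, Differentiable ℝ (fun s : ℝ => η t (a, s)) := fun a =>
    (hline2 a).differentiable (by norm_num)
  have hg1 : Differentiable ℝ (deriv (fun s : ℝ => η t (s, x2))) := by
    have h := hline1 x2
    rw [show (2 : WithTop ℕ∞) = 1 + 1 from rfl] at h
    exact ((contDiff_succ_iff_deriv.mp h).2.2).differentiable one_ne_zero
  have hg2 : Differentiable ℝ (deriv (fun s : ℝ => η t (x1, s))) := by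
    have h := hline2 x1
    rw [show (2 : WithTop ℕ∞) = 1 + 1 from rfl] at h
    exact ((contDiff_succ_iff_deriv.mp h).2.2).differentiable one_ne_zero
  have hdt : deriv (fun s => φ s (x1, x2)) t
      = Complex.I * Complex.ofReal (deriv (fun s => η s (x1, x2)) t) * E := by
    have h0 : (fun s => φ s (x1, x2))
        = fun s => Complex.exp (Complex.I * Complex.ofReal (η s (x1, x2))) := by
      funext s; exact hφ s _
    rw [h0]
    exact (expI_hasDerivAt (fun s => η s (x1, x2)) t ((hηt (x1, x2)) t)).deriv
  have hpd1 : pd1 (fun y => φ t y) (x1, x2)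
      = Complex.I * Complex.ofReal (pd1 (fun y => η t y) (x1, x2)) * E := by
    unfold pd1
    have h0 : (fun s => φ t (s, x2))
        = fun s => Complex.exp (Complex.I * Complex.ofReal (η t (s, x2))) := by
      funext s; exact hφ t _
    rw [h0]
    exact (expI_hasDerivAt (fun s => η t (s, x2)) x1 ((hdiff1 x2) x1)).deriv
  have hpd2 : pd2 (fun y => φ t y) (x1, x2)
      = Complex.I * Complex.ofReal (pd2 (fun y => η t y) (x1, x2)) * E := by
    unfold pd2
    have h0 : (fun s => φ t (x1, s))
        = fun s => Complex.exp (Complex.I * Complex.ofReal (η t (x1, s))) := by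
      funext s; exact hφ t _
    rw [h0]
    exact (expI_hasDerivAt (fun s => η t (x1, s)) x2 ((hdiff2 x1) x2)).deriv
  set g1 : ℝ → ℝ := deriv (fun s : ℝ => η t (s, x2)) with hg1def
  set g2 : ℝ → ℝ := deriv (fun s : ℝ => η t (x1, s)) with hg2def
  have hlapφ : lap (fun y => φ t y) (x1, x2)
      = (Complex.I * Complex.ofReal (lap (fun y => η t y) (x1, x2))
          - (Complex.ofReal (g1 x1) ^ 2 + Complex.ofReal (g2 x2) ^ 2)) * E := by
    unfold lap
    have e1 : (fun s => deriv (fun s' => φ t (s', x2)) s)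
        = fun s => Complex.I * Complex.ofReal (g1 s) *
            Complex.exp (Complex.I * Complex.ofReal (η t (s, x2))) := by
      funext s
      have h0 : (fun s' => φ t (s', x2))
          = fun s' => Complex.exp (Complex.I * Complex.ofReal (η t (s', x2))) := by
        funext s'; exact hφ t _
      rw [h0]
      exact (expI_hasDerivAt (fun s' => η t (s', x2)) s ((hdiff1 x2) s)).deriv
    have e2 : (fun s => deriv (fun s' => φ t (x1, s')) s)
        = fun s => Complex.I * Complex.ofReal (g2 s) *
            Complex.exp (Complex.I * Complex.ofReal (η t (x1, s))) := by
      funext s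
      have h0 : (fun s' => φ t (x1, s'))
          = fun s' => Complex.exp (Complex.I * Complex.ofReal (η t (x1, s'))) := by
        funext s'; exact hφ t _
      rw [h0]
      exact (expI_hasDerivAt (fun s' => η t (x1, s')) s ((hdiff2 x1) s)).deriv
    rw [e1, e2]
    have d1 := (expI_second g1 (fun s : ℝ => η t (s, x2)) x1 (hg1 x1) ((hdiff1 x2) x1)).deriv
    have d2 := (expI_second g2 (fun s : ℝ => η t (x1, s)) x2 (hg2 x2) ((hdiff2 x1) x2)).deriv
    rw [d1, d2]
    simp only [← hg1def, ← hg2def, ← hE]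
    push_cast
    ring_nf
    rw [Complex.I_sq]
    ring
  have hn1 : (‖pd1 (fun y => φ t y) (x1, x2)‖ : ℝ) ^ 2 = (g1 x1) ^ 2 := by
    rw [hpd1]
    have : pd1 (fun y => η t y) (x1, x2) = g1 x1 := rfl
    rw [this, hE, norm_I_mul_exp, sq_abs]
  have hn2 : (‖pd2 (fun y => φ t y) (x1, x2)‖ : ℝ) ^ 2 = (g2 x2) ^ 2 := by
    rw [hpd2]
    have : pd2 (fun y => η t y) (x1, x2) = g2 x2 := rfl
    rw [this, hE, norm_I_mul_exp, sq_abs]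
  rw [hdt, hlapφ, hn1, hn2, hφ t (x1, x2), ← hE]
  have hEne : E ≠ 0 := Complex.exp_ne_zero _
  constructor
  · intro h
    have h2 : Complex.I * Complex.ofReal (deriv (fun s => η s (x1, x2)) t) * E
        = Complex.I * Complex.ofReal (lap (fun y => η t y) (x1, x2)) * E := by
      rw [h]; push_cast; ring
    have h3 := mul_right_cancel₀ hEne h2
    have h4 := mul_left_cancel₀ Complex.I_ne_zero h3
    exact_mod_cast h4
  · intro h
    rw [h]; push_cast; ring
end

section
/- Let n ≥ 1 and let B₀ ∈ M(n,ℝ) be invertible with singular value decomposition B₀ = U·Σ₀·Vᵀ, where U and V are orthogonal and Σ₀ is diagonal with strictly positive diagonal entries. Suppose B : [0,∞) → M(n,ℝ) is differentiable with B(0) = B₀ and B'(t) = B(t)·(I − B(t)ᵀ·B(t)) for all t ≥ 0 (the reaction ODE arising from the matrix Allen–Cahn equation ∂_t A = ΔA − ε⁻²A(AᵀA − I) at a single spatial point). Then B(t) converges to U·Vᵀ as t → ∞; U·Vᵀ is the orthogonal matrix closest to B₀ in Frobenius norm. -/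
open Matrix Filter

attribute [local instance] Matrix.frobeniusNormedAddCommGroup Matrix.frobeniusNormedSpace

section Aux

/-- The scalar denominator in the explicit solution of `σ' = σ - σ³`. -/
noncomputable def sden (s t : ℝ) : ℝ := s^2 + (1 - s^2) * Real.exp (-2*t)

/-- The explicit solution of `σ' = σ - σ³` with `σ 0 = s`. -/
noncomputable def sig (s t : ℝ) : ℝ := s / Real.sqrt (sden s t)

lemma sden_pos {s : ℝ} (hs : 0 < s) {t : ℝ} (ht : 0 ≤ t) : 0 < sden s t := by
  have he : 0 < Real.exp (-2*t) := Real.exp_pos _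
  have he1 : Real.exp (-2*t) ≤ 1 := by
    rw [Real.exp_le_one_iff]; nlinarith
  unfold sden
  nlinarith [mul_nonneg (sq_nonneg s) (sub_nonneg.2 he1)]

lemma sig_zero (s : ℝ) : sig s 0 = s := by
  simp [sig, sden]

lemma hasDerivAt_sig {s : ℝ} (hs : 0 < s) {t : ℝ} (ht : 0 ≤ t) :
    HasDerivAt (sig s) (sig s t - (sig s t)^3) t := by
  have hd : 0 < sden s t := sden_pos hs ht
  have hde : HasDerivAt (fun u : ℝ => Real.exp (-2*u)) (Real.exp (-2*t) * (-2)) t := by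
    simpa using ((hasDerivAt_id t).const_mul (-2 : ℝ)).exp
  have hdd : HasDerivAt (sden s) ((1 - s^2) * (Real.exp (-2*t) * (-2))) t :=
    (hde.const_mul (1 - s^2)).const_add (s^2)
  have hsq : HasDerivAt (fun u => Real.sqrt (sden s u))
      ((1 - s^2) * (Real.exp (-2*t) * (-2)) / (2 * Real.sqrt (sden s t))) t :=
    hdd.sqrt hd.ne'
  have hsqp : 0 < Real.sqrt (sden s t) := Real.sqrt_pos.2 hd
  have h := (hasDerivAt_const t s).div hsq hsqp.ne'
  refine h.congr_deriv (Eq.symm ?_)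
  have h2 : Real.sqrt (sden s t) ^ 2 = sden s t := Real.sq_sqrt hd.le
  have hd0 : sden s t = s^2 + (1 - s^2) * Real.exp (-(2*t)) := by rw [sden]; norm_num
  rw [sig]
  field_simp
  simp only [neg_mul] at *
  linear_combination s * h2 + s * hd0

lemma tendsto_sig {s : ℝ} (hs : 0 < s) : Tendsto (sig s) atTop (nhds 1) := by
  have h1 : Tendsto (fun t : ℝ => Real.exp (-2*t)) atTop (nhds 0) := by
    have ha : Tendsto (fun t : ℝ => 2 * t) atTop atTop :=
      (tendsto_const_mul_atTop_of_pos two_pos).2 tendsto_id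
    have := Real.tendsto_exp_neg_atTop_nhds_zero.comp ha
    exact this.congr fun x => by simp [Function.comp, neg_mul]
  have h2 : Tendsto (fun t => sden s t) atTop (nhds (s^2)) := by
    have := (h1.const_mul (1 - s^2)).const_add (s^2)
    simpa [sden] using this
  have h3 : Tendsto (fun t => Real.sqrt (sden s t)) atTop (nhds s) := by
    have := (Real.continuous_sqrt.tendsto (s^2)).comp h2
    simpa [Real.sqrt_sq hs.le, Function.comp_def] using this
  have := (tendsto_const_nhds (x := s)).div h3 hs.ne'
  rw [div_self hs.ne'] at this
  exact this

variable {n : ℕ}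

lemma frob_norm_sq (A : Matrix (Fin n) (Fin n) ℝ) :
    ‖A‖^2 = ∑ i, ∑ j, (A i j)^2 := by
  rw [Matrix.frobenius_norm_def, ← Real.rpow_natCast _ 2, ← Real.rpow_mul (by positivity)]
  norm_num

lemma frob_lip (R : ℝ) (hR : 0 ≤ R) :
    LipschitzOnWith (Real.toNNReal (1 + 3*R^2))
      (fun X : Matrix (Fin n) (Fin n) ℝ => X * (1 - Xᵀ * X))
      (Metric.closedBall 0 R) := by
  rw [lipschitzOnWith_iff_dist_le_mul]
  intro X hX Y hY
  rw [Metric.mem_closedBall, dist_zero_right] at hX hY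
  rw [dist_eq_norm, dist_eq_norm]
  have key : X * (1 - Xᵀ * X) - Y * (1 - Yᵀ * Y)
      = (X - Y) - ((X - Y) * (Xᵀ * X) + Y * ((X - Y)ᵀ * X) + (Y * Yᵀ) * (X - Y)) := by
    simp only [Matrix.transpose_sub]
    noncomm_ring
  rw [key]
  have h1 : ‖(X - Y) * (Xᵀ * X)‖ ≤ ‖X - Y‖ * (R * R) := by
    calc ‖(X - Y) * (Xᵀ * X)‖ ≤ ‖X - Y‖ * ‖Xᵀ * X‖ := Matrix.frobenius_norm_mul _ _
    _ ≤ ‖X - Y‖ * (‖Xᵀ‖ * ‖X‖) := by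
        gcongr
        exact Matrix.frobenius_norm_mul _ _
    _ ≤ ‖X - Y‖ * (R * R) := by
        rw [Matrix.frobenius_norm_transpose]
        gcongr <;> first | exact hX | exact hY
  have h2 : ‖Y * ((X - Y)ᵀ * X)‖ ≤ R * (‖X - Y‖ * R) := by
    calc ‖Y * ((X - Y)ᵀ * X)‖ ≤ ‖Y‖ * ‖(X - Y)ᵀ * X‖ := Matrix.frobenius_norm_mul _ _
    _ ≤ ‖Y‖ * (‖(X - Y)ᵀ‖ * ‖X‖) := by
        gcongr
        exact Matrix.frobenius_norm_mul _ _
    _ ≤ R * (‖X - Y‖ * R) := by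
        rw [Matrix.frobenius_norm_transpose]
        gcongr <;> first | exact hX | exact hY
  have h3 : ‖(Y * Yᵀ) * (X - Y)‖ ≤ R * R * ‖X - Y‖ := by
    calc ‖(Y * Yᵀ) * (X - Y)‖ ≤ ‖Y * Yᵀ‖ * ‖X - Y‖ := Matrix.frobenius_norm_mul _ _
    _ ≤ ‖Y‖ * ‖Yᵀ‖ * ‖X - Y‖ := by
        gcongr
        exact Matrix.frobenius_norm_mul _ _
    _ ≤ R * R * ‖X - Y‖ := by
        rw [Matrix.frobenius_norm_transpose]
        gcongr <;> first | exact hX | exact hY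
  have h0 := norm_sub_le ((X : Matrix (Fin n) (Fin n) ℝ) - Y)
      ((X - Y) * (Xᵀ * X) + Y * ((X - Y)ᵀ * X) + (Y * Yᵀ) * (X - Y))
  have h4 := norm_add₃_le (a := (X - Y) * (Xᵀ * X)) (b := Y * ((X - Y)ᵀ * X))
      (c := (Y * Yᵀ) * (X - Y))
  rw [Real.coe_toNNReal _ (by positivity)]
  nlinarith [norm_nonneg (X - Y)]

lemma orth_sum_sq {Q : Matrix (Fin n) (Fin n) ℝ} (hQ : Qᵀ * Q = 1) :
    ∑ i, ∑ j, (Q i j)^2 = (n : ℝ) := by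
  rw [Finset.sum_comm]
  have h : ∀ j, ∑ i, (Q i j)^2 = 1 := by
    intro j
    have := congrFun (congrFun hQ j) j
    simp [Matrix.mul_apply, Matrix.one_apply, sq] at this ⊢
    convert this using 1
  simp [h]

lemma orth_entry_le_one {Q : Matrix (Fin n) (Fin n) ℝ} (hQ : Qᵀ * Q = 1) (k : Fin n) :
    Q k k ≤ 1 := by
  have h := congrFun (congrFun hQ k) k
  simp [Matrix.mul_apply, Matrix.one_apply] at h
  have h1 : (Q k k)^2 ≤ 1 := by
    calc (Q k k)^2 = Q k k * Q k k := sq (Q k k) ▸ rfl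
    _ ≤ ∑ i, Q i k * Q i k := by
        apply Finset.single_le_sum (f := fun i => Q i k * Q i k) (fun i _ => mul_self_nonneg _)
          (Finset.mem_univ k)
    _ = 1 := h
  nlinarith

/-- The sandwich map `v ↦ U * diagonal v * Vᵀ` as a continuous linear map. -/
noncomputable def sand (U V : Matrix (Fin n) (Fin n) ℝ) :
    (Fin n → ℝ) →L[ℝ] Matrix (Fin n) (Fin n) ℝ :=
  LinearMap.toContinuousLinearMap
    { toFun := fun v => U * Matrix.diagonal v * Vᵀ
      map_add' := fun x y => by
        have h : Matrix.diagonal (x + y) = Matrix.diagonal x + Matrix.diagonal y := by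
          ext i j; by_cases h : i = j <;> simp [Matrix.diagonal, h]
        simp only [h, mul_add, add_mul]
      map_smul' := fun c x => by
        simp only [Matrix.diagonal_smul, RingHom.id_apply, smul_mul_assoc, mul_smul_comm] }

lemma sand_apply (U V : Matrix (Fin n) (Fin n) ℝ) (v : Fin n → ℝ) :
    sand U V v = U * Matrix.diagonal v * Vᵀ := rfl

end Aux

/-- Lemma 2.1: the solution of the matrix reaction ODE `B' = B(I - BᵀB)` with invertible
initial condition `B₀ = U S₀ Vᵀ` converges to `U Vᵀ`, the orthogonal matrix closest to `B₀`
in the Frobenius norm. -/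
theorem stmt5 (n : ℕ) (hn : 1 ≤ n) (B₀ U V S₀ : Matrix (Fin n) (Fin n) ℝ)
    (hB₀ : IsUnit B₀)
    (hU : Uᵀ * U = 1) (hV : Vᵀ * V = 1)
    (hSdiag : ∀ i j : Fin n, i ≠ j → S₀ i j = 0)
    (hSpos : ∀ i : Fin n, 0 < S₀ i i)
    (hSVD : B₀ = U * S₀ * Vᵀ)
    (B : ℝ → Matrix (Fin n) (Fin n) ℝ) (hB0 : B 0 = B₀)
    (hB : ∀ t : ℝ, 0 ≤ t →
      HasDerivWithinAt B (B t * (1 - (B t)ᵀ * B t)) (Set.Ici 0) t) :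
    Tendsto B atTop (nhds (U * Vᵀ)) ∧
      ∀ Q : Matrix (Fin n) (Fin n) ℝ, Qᵀ * Q = 1 → ‖B₀ - U * Vᵀ‖ ≤ ‖B₀ - Q‖ := by
  have hU' : ∀ X : Matrix (Fin n) (Fin n) ℝ, Uᵀ * (U * X) = X := fun X => by
    rw [← Matrix.mul_assoc, hU, Matrix.one_mul]
  have hV' : ∀ X : Matrix (Fin n) (Fin n) ℝ, Vᵀ * (V * X) = X := fun X => by
    rw [← Matrix.mul_assoc, hV, Matrix.one_mul]
  constructor
  · -- Part 1: convergence
    set g : ℝ → Matrix (Fin n) (Fin n) ℝ := fun t => sand U V (fun i => sig (S₀ i i) t) with hg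
    have hg0 : g 0 = B₀ := by
      rw [hg, hSVD]
      simp only [sand_apply]
      rw [show Matrix.diagonal (fun i => sig (S₀ i i) 0) = S₀ from by
        ext a b; by_cases h : a = b
        · subst h; simp [sig_zero]
        · simp [Matrix.diagonal_apply_ne _ h, hSdiag a b h]]
    have hgderiv : ∀ t : ℝ, 0 ≤ t → HasDerivAt g (g t * (1 - (g t)ᵀ * g t)) t := by
      intro t ht
      have hpi : HasDerivAt (fun u => (fun i => sig (S₀ i i) u))
          (fun i => sig (S₀ i i) t - (sig (S₀ i i) t)^3) t :=
        hasDerivAt_pi.2 fun i => hasDerivAt_sig (hSpos i) ht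
      have h := ((sand U V).hasFDerivAt.comp_hasDerivAt t hpi)
      have heq : sand U V (fun i => sig (S₀ i i) t - (sig (S₀ i i) t)^3)
          = g t * (1 - (g t)ᵀ * g t) := by
        have hdiag' : ∀ (a b : Fin n → ℝ) (X : Matrix (Fin n) (Fin n) ℝ),
            Matrix.diagonal a * (Matrix.diagonal b * X)
              = Matrix.diagonal (fun i => a i * b i) * X :=
          fun a b X => by rw [← Matrix.mul_assoc, Matrix.diagonal_mul_diagonal]
        rw [hg]
        simp only [sand_apply]
        rw [Matrix.mul_sub, Matrix.mul_one]
        rw [show Matrix.diagonal (fun i => sig (S₀ i i) t - (sig (S₀ i i) t)^3)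
            = Matrix.diagonal (fun i => sig (S₀ i i) t)
              - Matrix.diagonal (fun i => (sig (S₀ i i) t)^3) from by
          ext a b; by_cases h : a = b
          · subst h; simp
          · simp [Matrix.diagonal_apply_ne _ h]]
        rw [Matrix.mul_sub, Matrix.sub_mul]
        congr 1
        simp only [Matrix.transpose_mul, Matrix.transpose_transpose,
          Matrix.diagonal_transpose, Matrix.mul_assoc, hU', hV', hdiag']
        congr 2
        exact congrArg Matrix.diagonal (funext fun i => by ring)
      rw [← heq]
      exact h
    have huniq : ∀ T : ℝ, 0 ≤ T → B T = g T := by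
      intro T hT
      have hBc : ContinuousOn B (Set.Icc 0 T) :=
        fun x hx => ((hB x hx.1).continuousWithinAt).mono Set.Icc_subset_Ici_self
      have hgc : ContinuousOn g (Set.Icc 0 T) :=
        fun x hx => ((hgderiv x hx.1).continuousAt).continuousWithinAt
      obtain ⟨C1, hC1⟩ := isCompact_Icc.exists_bound_of_continuousOn hBc
      obtain ⟨C2, hC2⟩ := isCompact_Icc.exists_bound_of_continuousOn hgc
      set R : ℝ := max (max C1 C2) 0 with hR
      have hR0 : 0 ≤ R := le_max_right _ _
      have hmemB : ∀ t ∈ Set.Ico 0 T,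
          B t ∈ Metric.closedBall (0 : Matrix (Fin n) (Fin n) ℝ) R := by
        intro t ht
        rw [Metric.mem_closedBall, dist_zero_right]
        exact (hC1 t ⟨ht.1, ht.2.le⟩).trans ((le_max_left C1 C2).trans (le_max_left _ _))
      have hmemg : ∀ t ∈ Set.Ico 0 T,
          g t ∈ Metric.closedBall (0 : Matrix (Fin n) (Fin n) ℝ) R := by
        intro t ht
        rw [Metric.mem_closedBall, dist_zero_right]
        exact (hC2 t ⟨ht.1, ht.2.le⟩).trans ((le_max_right C1 C2).trans (le_max_left _ _))
      have hEq := ODE_solution_unique_of_mem_Icc_right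
        (v := fun _ X => X * (1 - Xᵀ * X)) (s := fun _ => Metric.closedBall 0 R)
        (fun _ _ => frob_lip R hR0) hBc
        (fun t ht => (hB t ht.1).mono (Set.Ici_subset_Ici.2 ht.1))
        hmemB hgc
        (fun t ht => (hgderiv t ht.1).hasDerivWithinAt)
        hmemg
        (by rw [hg0, hB0])
      exact hEq ⟨hT, le_refl T⟩
    have hgt : Tendsto g atTop (nhds (U * Vᵀ)) := by
      have hs : Tendsto (fun t => (fun i => sig (S₀ i i) t)) atTop (nhds (fun _ => (1:ℝ))) :=
        tendsto_pi_nhds.2 fun i => tendsto_sig (hSpos i)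
      have h2 := ((sand U V).continuous.tendsto _).comp hs
      have h1 : sand U V (fun _ => (1:ℝ)) = U * Vᵀ := by
        rw [sand_apply, Matrix.diagonal_one, Matrix.mul_one]
      rw [h1] at h2
      exact h2
    exact hgt.congr'
      (by filter_upwards [eventually_ge_atTop (0:ℝ)] with t ht using (huniq t ht).symm)
  · -- Part 2: closest orthogonal matrix
    have hB₀e : ∀ i j, B₀ i j = ∑ k, U i k * S₀ k k * V j k := by
      intro i j
      rw [hSVD]
      rw [show S₀ = Matrix.diagonal (fun i => S₀ i i) from by
        ext a b; by_cases h : a = b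
        · subst h; simp
        · simp [Matrix.diagonal, h, hSdiag a b h]]
      rw [Matrix.mul_apply]
      simp [Matrix.mul_diagonal, Matrix.transpose_apply]
    have hcross : ∀ Q : Matrix (Fin n) (Fin n) ℝ,
        ∑ i, ∑ j, B₀ i j * Q i j = ∑ k, S₀ k k * (Uᵀ * Q * V) k k := by
      intro Q
      have hW : ∀ k, (Uᵀ * Q * V) k k = ∑ i, ∑ j, U i k * Q i j * V j k := by
        intro k
        simp [Matrix.mul_apply, Matrix.transpose_apply, Finset.sum_mul]
        rw [Finset.sum_comm]
      calc ∑ i, ∑ j, B₀ i j * Q i j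
          = ∑ i, ∑ j, ∑ k, S₀ k k * U i k * Q i j * V j k := by
            refine Finset.sum_congr rfl fun i _ => Finset.sum_congr rfl fun j _ => ?_
            rw [hB₀e, Finset.sum_mul]
            exact Finset.sum_congr rfl fun k _ => by ring
        _ = ∑ i, ∑ k, ∑ j, S₀ k k * U i k * Q i j * V j k := by
            exact Finset.sum_congr rfl fun i _ => Finset.sum_comm
        _ = ∑ k, ∑ i, ∑ j, S₀ k k * U i k * Q i j * V j k := Finset.sum_comm
        _ = ∑ k, S₀ k k * (Uᵀ * Q * V) k k := by
            refine Finset.sum_congr rfl fun k _ => ?_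
            rw [hW, Finset.mul_sum]
            refine Finset.sum_congr rfl fun i _ => ?_
            rw [Finset.mul_sum]
            exact Finset.sum_congr rfl fun j _ => by ring
    intro Q hQ
    have hUU : U * Uᵀ = 1 := mul_eq_one_comm.1 hU
    have hVV : V * Vᵀ = 1 := mul_eq_one_comm.1 hV
    have hUU' : ∀ X : Matrix (Fin n) (Fin n) ℝ, U * (Uᵀ * X) = X := fun X => by
      rw [← Matrix.mul_assoc, hUU, Matrix.one_mul]
    have hQ' : ∀ X : Matrix (Fin n) (Fin n) ℝ, Qᵀ * (Q * X) = X := fun X => by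
      rw [← Matrix.mul_assoc, hQ, Matrix.one_mul]
    have hUVorth : (U * Vᵀ)ᵀ * (U * Vᵀ) = 1 := by
      simp only [Matrix.transpose_mul, Matrix.transpose_transpose, Matrix.mul_assoc, hU']
      exact hVV
    have hWorth : (Uᵀ * Q * V)ᵀ * (Uᵀ * Q * V) = 1 := by
      simp only [Matrix.transpose_mul, Matrix.transpose_transpose, Matrix.mul_assoc, hUU', hQ']
      exact hV
    have hWUV : Uᵀ * (U * Vᵀ) * V = 1 := by
      simp only [Matrix.mul_assoc, hU']
      exact hV
    have hle : ∑ k, S₀ k k * (Uᵀ * Q * V) k k ≤ ∑ k, S₀ k k := by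
      apply Finset.sum_le_sum
      intro k _
      have := orth_entry_le_one hWorth k
      nlinarith [hSpos k]
    have heq : ∑ k, S₀ k k * (Uᵀ * (U * Vᵀ) * V) k k = ∑ k, S₀ k k := by
      rw [hWUV]; simp [Matrix.one_apply]
    rw [← Real.sqrt_sq (norm_nonneg (B₀ - U * Vᵀ)), ← Real.sqrt_sq (norm_nonneg (B₀ - Q))]
    apply Real.sqrt_le_sqrt
    rw [frob_norm_sq, frob_norm_sq]
    have expand : ∀ M : Matrix (Fin n) (Fin n) ℝ, Mᵀ * M = 1 →
        ∑ i, ∑ j, ((B₀ - M) i j)^2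
          = ∑ i, ∑ j, (B₀ i j)^2 - 2 * (∑ i, ∑ j, B₀ i j * M i j) + n := by
      intro M hM
      have e : ∀ i j, ((B₀ - M) i j)^2 = (B₀ i j)^2 - 2 * (B₀ i j * M i j) + (M i j)^2 := by
        intro i j; simp [Matrix.sub_apply]; ring
      simp_rw [e, Finset.sum_add_distrib, Finset.sum_sub_distrib, ← Finset.mul_sum]
      rw [orth_sum_sq hM]
    rw [expand _ hUVorth, expand _ hQ, hcross, hcross, heq]
    linarith [hle]
end

section
/- Let n ≥ 1, let U, V ∈ M(n,ℝ) be orthogonal matrices, and let σ₁,…,σₙ : [0,∞) → ℝ be differentiable functions satisfying σᵢ'(t) = σᵢ(t) − σᵢ(t)³ for all t ≥ 0 and each i. Define B(t) = U·diag(σ₁(t),…,σₙ(t))·Vᵀ. Then B is differentiable and B'(t) = B(t)·(I − B(t)ᵀ·B(t)) for all t ≥ 0. -/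
open Matrix

attribute [local instance] Matrix.frobeniusNormedAddCommGroup Matrix.frobeniusNormedSpace

noncomputable def sandwichCLM (n : ℕ) (U V : Matrix (Fin n) (Fin n) ℝ) :
    (Fin n → ℝ) →L[ℝ] Matrix (Fin n) (Fin n) ℝ :=
  LinearMap.toContinuousLinearMap
    { toFun := fun d => U * Matrix.diagonal d * Vᵀ
      map_add' := fun a b => by
        show U * Matrix.diagonal (fun i => a i + b i) * Vᵀ
            = U * Matrix.diagonal a * Vᵀ + U * Matrix.diagonal b * Vᵀ
        rw [← Matrix.diagonal_add, Matrix.mul_add, Matrix.add_mul]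
      map_smul' := fun c a => by
        show U * Matrix.diagonal (c • a) * Vᵀ = c • (U * Matrix.diagonal a * Vᵀ)
        rw [Matrix.diagonal_smul, Matrix.mul_smul, Matrix.smul_mul] }

lemma sandwichCLM_apply (n : ℕ) (U V : Matrix (Fin n) (Fin n) ℝ) (d : Fin n → ℝ) :
    sandwichCLM n U V d = U * Matrix.diagonal d * Vᵀ := rfl

lemma sandwich_cube (n : ℕ) (U V : Matrix (Fin n) (Fin n) ℝ)
    (hU : Uᵀ * U = 1) (hV : Vᵀ * V = 1) (d : Fin n → ℝ) :
    (U * Matrix.diagonal d * Vᵀ) * ((U * Matrix.diagonal d * Vᵀ)ᵀ *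
      (U * Matrix.diagonal d * Vᵀ)) = U * Matrix.diagonal (fun i => d i ^ 3) * Vᵀ := by
  have h1 : (U * Matrix.diagonal d * Vᵀ)ᵀ = V * Matrix.diagonal d * Uᵀ := by
    simp [Matrix.transpose_mul, Matrix.mul_assoc]
  rw [h1]
  have : U * Matrix.diagonal d * Vᵀ * (V * Matrix.diagonal d * Uᵀ *
      (U * Matrix.diagonal d * Vᵀ)) =
      U * (Matrix.diagonal d * ((Vᵀ * V) * (Matrix.diagonal d * ((Uᵀ * U) *
        (Matrix.diagonal d * Vᵀ))))) := by
    simp only [Matrix.mul_assoc]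
  rw [this, hV, hU, Matrix.one_mul, Matrix.one_mul]
  have h2 : Matrix.diagonal d * (Matrix.diagonal d * (Matrix.diagonal d * Vᵀ)) =
      Matrix.diagonal (fun i => d i ^ 3) * Vᵀ := by
    rw [← Matrix.mul_assoc, ← Matrix.mul_assoc, Matrix.diagonal_mul_diagonal,
      Matrix.diagonal_mul_diagonal]
    congr 1
    funext i
    ring
  rw [h2, ← Matrix.mul_assoc]

/-- The matrix reaction ODE `B' = B(I - BᵀB)` preserves the singular vectors: if each
singular value satisfies `σᵢ' = σᵢ - σᵢ³`, then `B(t) = U diag(σ(t)) Vᵀ` solves the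
matrix ODE. -/
theorem stmt7 (n : ℕ) (hn : 1 ≤ n) (U V : Matrix (Fin n) (Fin n) ℝ)
    (hU : Uᵀ * U = 1) (hV : Vᵀ * V = 1)
    (σ : Fin n → ℝ → ℝ)
    (hσ : ∀ (i : Fin n) (t : ℝ), 0 ≤ t →
      HasDerivWithinAt (σ i) (σ i t - σ i t ^ 3) (Set.Ici 0) t)
    (B : ℝ → Matrix (Fin n) (Fin n) ℝ)
    (hB : ∀ t : ℝ, B t = U * Matrix.diagonal (fun i => σ i t) * Vᵀ) :
    ∀ t : ℝ, 0 ≤ t → HasDerivWithinAt B (B t * (1 - (B t)ᵀ * B t)) (Set.Ici 0) t := by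
  intro t ht
  have hσv : HasDerivWithinAt (fun s i => σ i s) (fun i => σ i t - σ i t ^ 3)
      (Set.Ici 0) t :=
    hasDerivWithinAt_pi.mpr (fun i => hσ i t ht)
  have h1 : HasDerivWithinAt (fun s => sandwichCLM n U V (fun i => σ i s))
      (sandwichCLM n U V (fun i => σ i t - σ i t ^ 3)) (Set.Ici 0) t :=
    (sandwichCLM n U V).hasFDerivAt.comp_hasDerivWithinAt t hσv
  have hBe : B = fun s => sandwichCLM n U V (fun i => σ i s) := by
    funext s
    rw [sandwichCLM_apply, hB s]
  have hmul : B t * ((B t)ᵀ * B t) = U * Matrix.diagonal (fun i => σ i t ^ 3) * Vᵀ := by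
    rw [hB]
    exact sandwich_cube n U V hU hV _
  have hderiv : sandwichCLM n U V (fun i => σ i t - σ i t ^ 3)
      = B t * (1 - (B t)ᵀ * B t) := by
    rw [Matrix.mul_sub, Matrix.mul_one, hmul, sandwichCLM_apply]
    rw [← Matrix.diagonal_sub, Matrix.mul_sub, Matrix.sub_mul, hB]
  rw [← hderiv, hBe]
  exact h1
end

section
/- Let η₋, η₊ ∈ ℝ and set ξ₁ = (η₋ + η₊)/2, ξ₂ = (η₋ − η₊)/2. Define B : ℝ → M(2,ℝ) by B(z) = R(ξ₁)·diag(1, tanh(z/√2))·R(ξ₂)ᵀ, where R(θ) is the 2 × 2 rotation matrix. Then: (i) B is twice differentiable and B''(z) = B(z)·(B(z)ᵀ·B(z) − I) for all z ∈ ℝ; (ii) B(z) → [[cos η₋, sin η₋],[sin η₋, −cos η₋]] as z → −∞, a matrix with orthogonal columns and determinant −1; and (iii) B(z) → [[cos η₊, −sin η₊],[sin η₊, cos η₊]] as z → +∞, a rotation matrix with determinant +1. -/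
open Matrix Filter

attribute [local instance] Matrix.frobeniusNormedAddCommGroup Matrix.frobeniusNormedSpace

lemma myHasDerivAt_tanh (x : ℝ) : HasDerivAt Real.tanh (1 - Real.tanh x ^ 2) x := by
  have h1 : HasDerivAt Real.sinh (Real.cosh x) x := Real.hasDerivAt_sinh x
  have h2 : HasDerivAt Real.cosh (Real.sinh x) x := Real.hasDerivAt_cosh x
  have hc : Real.cosh x ≠ 0 := (Real.cosh_pos x).ne'
  have h : HasDerivAt (fun y => Real.sinh y / Real.cosh y) _ x := h1.div h2 hc
  have he : Real.tanh = fun y => Real.sinh y / Real.cosh y :=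
    funext fun y => Real.tanh_eq_sinh_div_cosh y
  rw [he]
  convert h using 1
  beta_reduce
  field_simp

lemma tanh_eq_exp (x : ℝ) :
    Real.tanh x = (1 - Real.exp (-(2*x))) / (1 + Real.exp (-(2*x))) := by
  rw [Real.tanh_eq_sinh_div_cosh, Real.sinh_eq, Real.cosh_eq]
  have h1 : Real.exp (-(2*x)) = Real.exp (-x) * Real.exp (-x) := by
    rw [← Real.exp_add]; ring_nf
  have h2 : Real.exp x * Real.exp (-x) = 1 := by rw [← Real.exp_add]; simp
  have h3 : ((Real.exp x + Real.exp (-x))/2 : ℝ) ≠ 0 := by positivity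
  have h4 : (1 + Real.exp (-(2*x)) : ℝ) ≠ 0 := by positivity
  rw [div_eq_div_iff h3 h4]
  linear_combination Real.exp x * h1 + (Real.exp (-x)) * h2

lemma tendsto_tanh_atTop' : Tendsto Real.tanh atTop (nhds 1) := by
  have h0 : Tendsto (fun x : ℝ => Real.exp (-(2*x))) atTop (nhds 0) := by
    apply Real.tendsto_exp_atBot.comp
    exact tendsto_neg_atTop_atBot.comp (Tendsto.const_mul_atTop two_pos tendsto_id)
  have h : Tendsto (fun x : ℝ => (1 - Real.exp (-(2*x))) / (1 + Real.exp (-(2*x)))) atTop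
      (nhds ((1 - 0) / (1 + 0))) :=
    Tendsto.div (tendsto_const_nhds.sub h0) (tendsto_const_nhds.add h0) (by norm_num)
  simpa [funext tanh_eq_exp] using h

lemma tendsto_tanh_atBot' : Tendsto Real.tanh atBot (nhds (-1)) := by
  have h : Tendsto (fun x : ℝ => -Real.tanh (-x)) atBot (nhds (-1)) := by
    simpa using (tendsto_tanh_atTop'.comp tendsto_neg_atBot_atTop).neg
  simpa [Real.tanh_neg] using h

lemma rot_orthT (θ : ℝ) : (rot θ)ᵀ * rot θ = 1 := by
  ext i j
  fin_cases i <;> fin_cases j <;>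
    simp [rot, Matrix.mul_apply, Fin.sum_univ_two, Matrix.one_apply, Matrix.vecHead,
      Matrix.vecTail] <;>
    nlinarith [Real.sin_sq_add_cos_sq θ]

lemma mulcancel {A B M : Matrix (Fin 2) (Fin 2) ℝ} (h : A * B = 1) : A * (B * M) = M := by
  rw [← Matrix.mul_assoc, h, Matrix.one_mul]

lemma key (a b t : ℝ) :
    (rot a * Matrix.diagonal ![1, t] * (rot b)ᵀ) *
      ((rot a * Matrix.diagonal ![1, t] * (rot b)ᵀ)ᵀ *
        (rot a * Matrix.diagonal ![1, t] * (rot b)ᵀ) - 1)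
    = (t^3 - t) • (rot a * Matrix.diagonal ![0, (1:ℝ)] * (rot b)ᵀ) := by
  have hd : (Matrix.diagonal ![1, t])ᵀ = Matrix.diagonal ![1, t] := Matrix.diagonal_transpose _
  have e2 : Matrix.diagonal ![1,t] * (Matrix.diagonal ![1,t] * Matrix.diagonal ![1,t])
        - Matrix.diagonal ![1,t]
      = (t^3 - t) • Matrix.diagonal ![0,(1:ℝ)] := by
    ext i j
    fin_cases i <;> fin_cases j <;>
      (simp [Matrix.diagonal, Matrix.mul_apply, Fin.sum_univ_two, Matrix.vecHead,
        Matrix.vecTail, Matrix.vecMul, dotProduct]; try ring)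
  rw [Matrix.transpose_mul, Matrix.transpose_mul, hd, Matrix.transpose_transpose]
  rw [mul_sub, mul_one]
  simp only [Matrix.mul_assoc]
  rw [mulcancel (rot_orthT b), mulcancel (rot_orthT a)]
  rw [show rot a * (Matrix.diagonal ![1,t] * (Matrix.diagonal ![1,t] * (Matrix.diagonal ![1,t] * (rot b)ᵀ)))
        - rot a * (Matrix.diagonal ![1,t] * (rot b)ᵀ)
      = rot a * ((Matrix.diagonal ![1,t] * (Matrix.diagonal ![1,t] * Matrix.diagonal ![1,t])
          - Matrix.diagonal ![1,t]) * (rot b)ᵀ) from by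
    simp only [Matrix.sub_mul, Matrix.mul_sub, Matrix.mul_assoc]]
  rw [e2]
  simp [Matrix.smul_mul, Matrix.mul_smul, Matrix.mul_assoc]

lemma decomp (a b t : ℝ) :
    rot a * Matrix.diagonal ![1, t] * (rot b)ᵀ
      = rot a * Matrix.diagonal ![1, (0:ℝ)] * (rot b)ᵀ
        + t • (rot a * Matrix.diagonal ![0, (1:ℝ)] * (rot b)ᵀ) := by
  ext i j
  fin_cases i <;> fin_cases j <;>
    (simp [rot, Matrix.diagonal, Matrix.mul_apply, Fin.sum_univ_two, Matrix.vecHead,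
      Matrix.vecTail, Matrix.vecMul, dotProduct]; try ring)

lemma limT (a b : ℝ) :
    rot a * Matrix.diagonal ![1, (0:ℝ)] * (rot b)ᵀ
      + (1:ℝ) • (rot a * Matrix.diagonal ![0, (1:ℝ)] * (rot b)ᵀ) = rot (a - b) := by
  ext i j
  fin_cases i <;> fin_cases j <;>
    (simp [rot, Matrix.diagonal, Matrix.mul_apply, Fin.sum_univ_two, Real.cos_sub,
      Real.sin_sub, Matrix.vecHead, Matrix.vecTail, Matrix.vecMul, dotProduct]; try ring)

lemma limB (a b : ℝ) :
    rot a * Matrix.diagonal ![1, (0:ℝ)] * (rot b)ᵀ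
      + (-1:ℝ) • (rot a * Matrix.diagonal ![0, (1:ℝ)] * (rot b)ᵀ)
      = !![Real.cos (a+b), Real.sin (a+b); Real.sin (a+b), -Real.cos (a+b)] := by
  ext i j
  fin_cases i <;> fin_cases j <;>
    (simp [rot, Matrix.diagonal, Matrix.mul_apply, Fin.sum_univ_two, Real.cos_add,
      Real.sin_add, Matrix.vecHead, Matrix.vecTail, Matrix.vecMul, dotProduct]; try ring)

lemma mneg_orth (η : ℝ) :
    !![Real.cos η, Real.sin η; Real.sin η, -Real.cos η]ᵀ *
      !![Real.cos η, Real.sin η; Real.sin η, -Real.cos η] = (1 : Matrix (Fin 2) (Fin 2) ℝ) := by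
  ext i j
  fin_cases i <;> fin_cases j <;>
    simp [Matrix.mul_apply, Fin.sum_univ_two, Matrix.one_apply, Matrix.vecHead,
      Matrix.vecTail] <;>
    nlinarith [Real.sin_sq_add_cos_sq η]

lemma mneg_det (η : ℝ) :
    (!![Real.cos η, Real.sin η; Real.sin η, -Real.cos η] : Matrix (Fin 2) (Fin 2) ℝ).det = -1 := by
  simp [Matrix.det_fin_two_of]
  nlinarith [Real.sin_sq_add_cos_sq η]

lemma rot_det (θ : ℝ) : (rot θ).det = 1 := by
  simp [rot, Matrix.det_fin_two_of]
  nlinarith [Real.sin_sq_add_cos_sq θ]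

/-- Proposition 3.2: the explicit transition profile
`B(z) = R(ξ₁) diag(1, tanh(z/√2)) R(ξ₂)ᵀ` with `ξ₁ = (η₋+η₊)/2`, `ξ₂ = (η₋−η₊)/2`
solves `B'' = B(BᵀB - I)` and connects a matrix in `SO_2⁻` at `z = -∞` to a rotation in
`SO_2` at `z = +∞`. -/
theorem stmt10 (ηm ηp : ℝ) (ξ₁ ξ₂ : ℝ) (hξ₁ : ξ₁ = (ηm + ηp) / 2) (hξ₂ : ξ₂ = (ηm - ηp) / 2)
    (B : ℝ → Matrix (Fin 2) (Fin 2) ℝ)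
    (hB : ∀ z : ℝ,
      B z = rot ξ₁ * Matrix.diagonal ![1, Real.tanh (z / Real.sqrt 2)] * (rot ξ₂)ᵀ) :
    ((∀ z : ℝ, HasDerivAt B (deriv B z) z) ∧
        ∀ z : ℝ, HasDerivAt (deriv B) (B z * ((B z)ᵀ * B z - 1)) z) ∧
      (Tendsto B atBot
          (nhds !![Real.cos ηm, Real.sin ηm; Real.sin ηm, -Real.cos ηm]) ∧
        (!![Real.cos ηm, Real.sin ηm; Real.sin ηm, -Real.cos ηm]ᵀ *
            !![Real.cos ηm, Real.sin ηm; Real.sin ηm, -Real.cos ηm] = 1) ∧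
        (!![Real.cos ηm, Real.sin ηm; Real.sin ηm, -Real.cos ηm] : Matrix (Fin 2) (Fin 2) ℝ).det = -1) ∧
      (Tendsto B atTop (nhds (rot ηp)) ∧ (rot ηp)ᵀ * rot ηp = 1 ∧ (rot ηp).det = 1) := by
  have hη1 : ξ₁ - ξ₂ = ηp := by rw [hξ₁, hξ₂]; ring
  have hη2 : ξ₁ + ξ₂ = ηm := by rw [hξ₁, hξ₂]; ring
  set C := rot ξ₁ * Matrix.diagonal ![1,(0:ℝ)] * (rot ξ₂)ᵀ with hC
  set D := rot ξ₁ * Matrix.diagonal ![0,(1:ℝ)] * (rot ξ₂)ᵀ with hD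
  have hBd : ∀ z, B z = C + Real.tanh (z / Real.sqrt 2) • D := fun z => by
    rw [hB z, decomp]
  have hBe : B = fun z => C + Real.tanh (z / Real.sqrt 2) • D := funext hBd
  have hs : (0:ℝ) < Real.sqrt 2 := Real.sqrt_pos.2 (by norm_num)
  set g := fun z : ℝ => (1 - Real.tanh (z / Real.sqrt 2)^2) * (Real.sqrt 2)⁻¹ with hg
  have htz : ∀ z : ℝ, HasDerivAt (fun z => Real.tanh (z / Real.sqrt 2)) (g z) z := fun z => by
    have h := (myHasDerivAt_tanh (z / Real.sqrt 2)).comp z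
      ((hasDerivAt_id z).div_const (Real.sqrt 2))
    simpa [hg, Function.comp_def, div_eq_mul_inv, one_div] using h
  have hB1 : ∀ z, HasDerivAt B (g z • D) z := fun z => by
    rw [hBe]
    exact ((htz z).smul_const D).const_add C
  have hderiv : deriv B = fun z => g z • D := funext fun z => (hB1 z).deriv
  have hinv : (Real.sqrt 2)⁻¹ * (Real.sqrt 2)⁻¹ = (2:ℝ)⁻¹ := by
    rw [← mul_inv, Real.mul_self_sqrt (by norm_num)]
  have hB2 : ∀ z, HasDerivAt (deriv B) (B z * ((B z)ᵀ * B z - 1)) z := fun z => by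
    have h1 := ((hasDerivAt_const z (1:ℝ)).sub ((htz z).pow 2)).mul_const (Real.sqrt 2)⁻¹
    have h2 : HasDerivAt (fun y => g y • D)
        (((0 - ((2:ℕ):ℝ) * Real.tanh (z / Real.sqrt 2) ^ (2 - 1) * g z) * (Real.sqrt 2)⁻¹) • D) z :=
      h1.smul_const D
    rw [hderiv, hB z, key]
    convert h2 using 2
    simp only [hg]
    push_cast
    set t := Real.tanh (z / Real.sqrt 2)
    linear_combination ((2:ℝ) * t - 2 * t^3) * hinv
  have hdivT : Tendsto (fun z : ℝ => z / Real.sqrt 2) atTop atTop :=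
    (tendsto_id : Tendsto (fun z : ℝ => z) atTop atTop).atTop_div_const hs
  have hdivB : Tendsto (fun z : ℝ => z / Real.sqrt 2) atBot atBot :=
    (tendsto_id : Tendsto (fun z : ℝ => z) atBot atBot).atBot_div_const hs
  have hT : Tendsto B atTop (nhds (rot ηp)) := by
    rw [hBe, ← hη1, ← limT ξ₁ ξ₂]
    exact tendsto_const_nhds.add ((tendsto_tanh_atTop'.comp hdivT).smul_const D)
  have hBt : Tendsto B atBot
      (nhds !![Real.cos ηm, Real.sin ηm; Real.sin ηm, -Real.cos ηm]) := by
    rw [hBe, ← hη2, ← limB ξ₁ ξ₂]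
    exact tendsto_const_nhds.add ((tendsto_tanh_atBot'.comp hdivB).smul_const D)
  exact ⟨⟨fun z => by rw [hderiv]; exact hB1 z, hB2⟩,
    ⟨hBt, mneg_orth ηm, mneg_det ηm⟩, ⟨hT, rot_orthT ηp, rot_det ηp⟩⟩
end

section
/- Let n ≥ 1, let U₁, U₂ ∈ M(n,ℝ) be orthogonal matrices, and let d₁,…,dₙ : ℝ → ℝ be twice differentiable functions with dᵢ''(z) = dᵢ(z)³ − dᵢ(z) for all z ∈ ℝ and each i. Define B(z) = U₁·diag(d₁(z),…,dₙ(z))·U₂ᵀ. Then B is twice differentiable and B''(z) = B(z)·(B(z)ᵀ·B(z) − I) for all z ∈ ℝ. -/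
open Matrix

attribute [local instance] Matrix.frobeniusNormedAddCommGroup Matrix.frobeniusNormedSpace
attribute [local instance] Matrix.frobeniusNormedRing Matrix.frobeniusNormedAlgebra

private lemma diag_eq_sum {n : ℕ} (v : Fin n → ℝ) :
    Matrix.diagonal v = ∑ i : Fin n, v i • Matrix.single i i (1 : ℝ) := by
  ext a b
  simp only [Matrix.sum_apply, Matrix.smul_apply, Matrix.single, Matrix.of_apply,
    Matrix.diagonal_apply, smul_eq_mul]
  rcases eq_or_ne a b with rfl | hab
  · simp [Finset.sum_ite_eq', eq_comm]
  · simp only [if_neg hab]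
    refine (Finset.sum_eq_zero fun i _ => ?_).symm
    rcases eq_or_ne a i with rfl | h
    · simp only [true_and]
      rw [if_neg (by exact fun h => hab h)]
      simp
    · simp [Ne.symm h]

private lemma hasDerivAt_diag {n : ℕ} (f : Fin n → ℝ → ℝ) (f' : Fin n → ℝ) (z : ℝ)
    (h : ∀ i, HasDerivAt (f i) (f' i) z) :
    HasDerivAt (fun z => Matrix.diagonal (fun i => f i z))
      (Matrix.diagonal f') z := by
  simp only [diag_eq_sum]
  exact HasDerivAt.fun_sum fun i _ => (h i).smul_const _

/-- Conjugating a diagonal solution of the componentwise stationary Allen--Cahn ODE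
`d'' = d³ - d` by fixed orthogonal matrices yields a solution of the matrix equation
`B'' = B(BᵀB - I)`. -/
theorem stmt12 (n : ℕ) (hn : 1 ≤ n) (U₁ U₂ : Matrix (Fin n) (Fin n) ℝ)
    (hU₁ : U₁ᵀ * U₁ = 1) (hU₂ : U₂ᵀ * U₂ = 1)
    (d : Fin n → ℝ → ℝ)
    (hd : ∀ (i : Fin n) (z : ℝ), HasDerivAt (d i) (deriv (d i) z) z)
    (hd' : ∀ (i : Fin n) (z : ℝ), HasDerivAt (deriv (d i)) (d i z ^ 3 - d i z) z)
    (B : ℝ → Matrix (Fin n) (Fin n) ℝ)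
    (hB : ∀ z : ℝ, B z = U₁ * Matrix.diagonal (fun i => d i z) * U₂ᵀ) :
    (∀ z : ℝ, HasDerivAt B (deriv B z) z) ∧
      ∀ z : ℝ, HasDerivAt (deriv B) (B z * ((B z)ᵀ * B z - 1)) z := by
  have hBfun : B = fun z => U₁ * Matrix.diagonal (fun i => d i z) * U₂ᵀ := funext hB
  have hD : ∀ z, HasDerivAt B (U₁ * Matrix.diagonal (fun i => deriv (d i) z) * U₂ᵀ) z := by
    intro z
    rw [hBfun]
    exact ((hasDerivAt_diag d (fun i => deriv (d i) z) z (fun i => hd i z)).const_mul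
      U₁).mul_const U₂ᵀ
  have hderiv : deriv B = fun z => U₁ * Matrix.diagonal (fun i => deriv (d i) z) * U₂ᵀ :=
    funext fun z => (hD z).deriv
  refine ⟨fun z => hderiv ▸ hD z, fun z => ?_⟩
  have hD2 : HasDerivAt (deriv B)
      (U₁ * Matrix.diagonal (fun i => d i z ^ 3 - d i z) * U₂ᵀ) z := by
    rw [hderiv]
    exact ((hasDerivAt_diag (fun i => deriv (d i)) (fun i => d i z ^ 3 - d i z) z
      (fun i => hd' i z)).const_mul U₁).mul_const U₂ᵀ
  have hU₁' : ∀ X : Matrix (Fin n) (Fin n) ℝ, U₁ᵀ * (U₁ * X) = X := fun X => by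
    rw [← Matrix.mul_assoc, hU₁, Matrix.one_mul]
  have hU₂' : ∀ X : Matrix (Fin n) (Fin n) ℝ, U₂ᵀ * (U₂ * X) = X := fun X => by
    rw [← Matrix.mul_assoc, hU₂, Matrix.one_mul]
  have key : B z * ((B z)ᵀ * B z - 1) =
      U₁ * Matrix.diagonal (fun i => d i z ^ 3 - d i z) * U₂ᵀ := by
    have hdd : ∀ (v w : Fin n → ℝ) (X : Matrix (Fin n) (Fin n) ℝ),
        Matrix.diagonal v * (Matrix.diagonal w * X) = Matrix.diagonal (fun i => v i * w i) * X :=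
      fun v w X => by rw [← Matrix.mul_assoc, Matrix.diagonal_mul_diagonal]
    rw [hB z]
    have hcube : Matrix.diagonal (fun i => d i z ^ 3 - d i z) =
        Matrix.diagonal (fun i => d i z * (d i z * d i z)) -
          Matrix.diagonal (fun i => d i z) := by
      ext a b
      rcases eq_or_ne a b with rfl | hab
      · simp only [Matrix.sub_apply, Matrix.diagonal_apply_eq]
        ring
      · simp [Matrix.diagonal_apply_ne _ hab]
    simp only [Matrix.transpose_mul, Matrix.diagonal_transpose, Matrix.transpose_transpose,
      Matrix.mul_sub, Matrix.mul_one, Matrix.mul_assoc, hU₁', hU₂', hdd, hcube,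
      Matrix.sub_mul]
  rw [← key] at hD2
  exact hD2
end
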